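/- For an invertible Hermitian matrix H*H (H an M×K complex matrix with linearly independent columns), the i-th diagonal entry of (H*H)^{-1} equals (h_i* h_i − h_i* H̄_i (H̄_i* H̄_i)^{-1} H̄_i* h_i)^{-1}, where h_i is the i-th column of H and H̄_i is H with its i-th column removed. -/

import Mathlib

open Matrix

/-- Schur-complement formula for a diagonal entry of the inverse Gram matrix:
for `H : ℂ^{M×(K+1)}` with invertible Gram matrix `Hᴴ H` (full column rank),
the `i`-th diagonal entry of `(Hᴴ H)⁻¹` equals
`(hᵢᴴ hᵢ − hᵢᴴ H̄ᵢ (H̄ᵢᴴ H̄ᵢ)⁻¹ H̄ᵢᴴ hᵢ)⁻¹`, where `hᵢ` is the `i`-th column of `H`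
and `H̄ᵢ` is `H` with its `i`-th column removed. -/
theorem diag_inv_gram_schur (M K : ℕ) (H : Matrix (Fin M) (Fin (K + 1)) ℂ)
    (i : Fin (K + 1))
    (Hbar : Matrix (Fin M) (Fin K) ℂ)
    (hHbar : ∀ (m : Fin M) (j : Fin K), Hbar m j = H m (i.succAbove j))
    (hGram : IsUnit (Hᴴ * H).det)
    (hGramBar : IsUnit (Hbarᴴ * Hbar).det)
    (h : Fin M → ℂ) (hh : ∀ m, h m = H m i) :
    (Hᴴ * H)⁻¹ i i =
      (star h ⬝ᵥ h - star h ⬝ᵥ (Hbar * (Hbarᴴ * Hbar)⁻¹ * Hbarᴴ) *ᵥ h)⁻¹ := by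
  classical
  set G := Hᴴ * H with hG
  let e : (Fin K ⊕ Unit) ≃ Fin (K + 1) :=
    (Equiv.optionEquivSumPUnit.{0} (Fin K)).symm.trans (finSuccEquiv' i).symm
  have he1 : ∀ j, e (Sum.inl j) = i.succAbove j := fun j => by
    simp [e, finSuccEquiv'_symm_some]
  have he2 : e (Sum.inr ()) = i := by
    simp [e, finSuccEquiv'_symm_none]
  set A := Hbarᴴ * Hbar with hA
  set B : Matrix (Fin K) Unit ℂ := Matrix.of (fun j _ => (Hbarᴴ *ᵥ h) j) with hB
  set C : Matrix Unit (Fin K) ℂ := Matrix.of (fun _ k => (star h ᵥ* Hbar) k) with hC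
  set D : Matrix Unit Unit ℂ := Matrix.of (fun _ _ => star h ⬝ᵥ h) with hD
  have hsub : G.submatrix e e = fromBlocks A B C D := by
    ext x y
    cases x <;> cases y <;>
      simp [fromBlocks, he1, he2, hG, hA, hB, hC, hD, mul_apply, conjTranspose_apply,
        hHbar, hh, mulVec, vecMul, dotProduct, mul_comm]
  haveI : Invertible G := G.invertibleOfIsUnitDet hGram
  haveI : Invertible A := A.invertibleOfIsUnitDet hGramBar
  haveI hFB : Invertible (fromBlocks A B C D) := by
    rw [← hsub]; exact submatrixEquivInvertible G e e
  haveI : Invertible (D - C * ⅟A * B) := invertibleOfFromBlocks₁₁Invertible A B C D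
  have key : G⁻¹ i i = (fromBlocks A B C D)⁻¹ (Sum.inr ()) (Sum.inr ()) := by
    rw [← hsub, inv_submatrix_equiv, submatrix_apply, he2]
  rw [key, ← invOf_eq_nonsing_inv, invOf_fromBlocks₁₁_eq A B C D]
  have h22 : (fromBlocks (⅟A + ⅟A * B * ⅟(D - C * ⅟A * B) * C * ⅟A)
      (-(⅟A * B * ⅟(D - C * ⅟A * B))) (-(⅟(D - C * ⅟A * B) * C * ⅟A))
      (⅟(D - C * ⅟A * B))) (Sum.inr ()) (Sum.inr ())
      = (⅟(D - C * ⅟A * B)) () () := rfl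
  rw [h22]
  -- 1×1 matrix inverse
  have hmul := invOf_mul_self (D - C * ⅟A * B)
  have h1 : (⅟(D - C * ⅟A * B)) () () *
      ((D - C * ⅟A * B) () ()) = 1 := by
    have := congrFun (congrFun hmul ()) ()
    simpa [mul_apply] using this
  have h2 := eq_inv_of_mul_eq_one_left h1
  rw [h2]
  congr 1
  have hAinv : (⅟A : Matrix (Fin K) (Fin K) ℂ) = A⁻¹ := invOf_eq_nonsing_inv A
  rw [Matrix.sub_apply, hAinv]
  congr 1
  have hCAB : (C * A⁻¹ * B) () ()
      = ((star h ᵥ* Hbar) ᵥ* A⁻¹) ⬝ᵥ (Hbarᴴ *ᵥ h) := by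
    simp [hB, hC, mul_apply, vecMul, dotProduct, Finset.sum_mul]
  have hRHS : star h ⬝ᵥ (Hbar * A⁻¹ * Hbarᴴ) *ᵥ h
      = ((star h ᵥ* Hbar) ᵥ* A⁻¹) ⬝ᵥ (Hbarᴴ *ᵥ h) := by
    rw [← Matrix.mulVec_mulVec, ← Matrix.mulVec_mulVec, dotProduct_mulVec, dotProduct_mulVec]
  rw [hCAB]
  exact hRHS.symm
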